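/- If the circle plane contains the origin, i.e. c∧I_c = 0 (so c = c∥ lies in the plane of I_c), then V₃ = P₁∧P₂∧P₃ = −(C − (1/2)r²n)·I_c·N, where C = c + (1/2)c²n + n̄ is the conformal center. -/

import Mathlib

set_option maxHeartbeats 1600000
set_option linter.unusedSectionVars false


noncomputable section
open scoped RealInnerProductSpace

/-- Euclidean 3-space. -/
abbrev E3 : Type := EuclideanSpace ℝ (Fin 3)

/-- The 5-dimensional space ℝ^{4,1}: Euclidean part plus coefficients of the
null vectors n (infinity) and n̄ (origin). -/
abbrev V5 : Type := E3 × ℝ × ℝ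

/-- Symmetric bilinear form of signature (4,1):
`⟪p,q⟫` on the Euclidean part, and `n·n̄ = -1` on the null pair. -/
def B5 : LinearMap.BilinForm ℝ V5 := LinearMap.mk₂ ℝ
  (fun x y => ⟪x.1, y.1⟫ - x.2.1 * y.2.2 - x.2.2 * y.2.1)
  (fun m₁ m₂ y => by simp only [Prod.fst_add, Prod.snd_add, inner_add_left]; ring)
  (fun c m y => by simp only [Prod.smul_fst, Prod.smul_snd, smul_eq_mul, real_inner_smul_left]; ring)
  (fun m y₁ y₂ => by simp only [Prod.fst_add, Prod.snd_add, inner_add_right]; ring)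
  (fun c m y => by simp only [Prod.smul_fst, Prod.smul_snd, smul_eq_mul, real_inner_smul_right]; ring)

/-- The quadratic form of R_{4,1}. -/
def Q5 : QuadraticForm ℝ V5 := B5.toQuadraticMap

/-- The Clifford geometric algebra R_{4,1}. -/
abbrev Cl : Type := CliffordAlgebra Q5

def ι5 : V5 →ₗ[ℝ] Cl := CliffordAlgebra.ι Q5

/-- Embedding of a Euclidean vector as a grade-1 element. -/
def ev (p : E3) : Cl := ι5 (p, 0, 0)

/-- The null vector n representing infinity. -/
def nInf : Cl := ι5 (0, 1, 0)

/-- The null vector n̄ representing the origin. -/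
def nOri : Cl := ι5 (0, 0, 1)

/-- The conformal point P = p + (1/2)p² n + n̄. -/
def cpt (p : E3) : Cl := ι5 (p, ⟪p, p⟫ / 2, 1)

/-- Outer (wedge) product of two vectors (grade-1 elements): antisymmetrized
geometric product. -/
def w2 (a b : Cl) : Cl := (2:ℝ)⁻¹ • (a * b - b * a)

/-- Outer (wedge) product of three vectors. -/
def w3 (a b c : Cl) : Cl := (6:ℝ)⁻¹ •
  (a*b*c - a*c*b - b*a*c + b*c*a + c*a*b - c*b*a)

/-- Outer (wedge) product of a vector with a bivector. -/
def vwB (v B : Cl) : Cl := (2:ℝ)⁻¹ • (v * B + B * v)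

/-- Left contraction of a vector into a bivector. -/
def lcontr (v B : Cl) : Cl := (2:ℝ)⁻¹ • (v * B - B * v)

/-- The Minkowski plane bivector N = n ∧ n̄. -/
def Nb : Cl := w2 nInf nOri


section base
lemma B5_apply (x y : V5) : B5 x y = ⟪x.1, y.1⟫ - x.2.1 * y.2.2 - x.2.2 * y.2.1 := rfl

lemma mulrel (x y : V5) : ι5 y * ι5 x = (B5 x y + B5 y x) • (1:Cl) - ι5 x * ι5 y := by
  have h := CliffordAlgebra.ι_mul_ι_add_swap (Q := Q5) x y
  rw [show QuadraticMap.polar (⇑Q5) x y = B5 x y + B5 y x from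
    LinearMap.BilinMap.polar_toQuadraticMap (B := B5) x y] at h
  rw [Algebra.algebraMap_eq_smul_one] at h
  exact eq_sub_of_add_eq (by rw [add_comm]; exact h)

lemma ev_rel (p q : E3) : ev q * ev p = (2*⟪p,q⟫)•(1:Cl) - ev p * ev q := by
  have h := mulrel (p,(0:ℝ),(0:ℝ)) (q,(0:ℝ),(0:ℝ))
  simp only [B5_apply, mul_zero, zero_mul, sub_zero] at h
  rw [real_inner_comm p q, ← two_mul] at h
  exact h

lemma ev_n (p : E3) : nInf * ev p = -(ev p * nInf) := by
  have h := mulrel (p,(0:ℝ),(0:ℝ)) ((0:E3),(1:ℝ),(0:ℝ))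
  simp only [B5_apply, mul_zero, zero_mul, mul_one, one_mul, sub_zero, zero_sub,
    inner_zero_right, inner_zero_left, zero_add, add_zero, zero_smul] at h
  simpa [nInf, nOri, ev] using h

lemma ev_m (p : E3) : nOri * ev p = -(ev p * nOri) := by
  have h := mulrel (p,(0:ℝ),(0:ℝ)) ((0:E3),(0:ℝ),(1:ℝ))
  simp only [B5_apply, mul_zero, zero_mul, mul_one, one_mul, sub_zero, zero_sub,
    inner_zero_right, inner_zero_left, zero_add, add_zero, zero_smul] at h
  simpa [nInf, nOri, ev] using h

lemma m_n : nOri * nInf = (-2:ℝ)•(1:Cl) - nInf * nOri := by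
  have h := mulrel ((0:E3),(1:ℝ),(0:ℝ)) ((0:E3),(0:ℝ),(1:ℝ))
  simp only [B5_apply, mul_zero, zero_mul, mul_one, one_mul, sub_zero, zero_sub,
    inner_zero_right, inner_zero_left, zero_add, add_zero] at h
  unfold nOri nInf
  convert h using 2
  norm_num

lemma Q5_apply (x : V5) : Q5 x = B5 x x := LinearMap.BilinMap.toQuadraticMap_apply B5 x

lemma n_sq : nInf * nInf = 0 := by
  have hq : Q5 ((0:E3),(1:ℝ),(0:ℝ)) = 0 := by
    rw [Q5_apply, B5_apply]; simp
  have h := CliffordAlgebra.ι_sq_scalar (Q := Q5) ((0:E3),(1:ℝ),(0:ℝ))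
  rw [hq, map_zero] at h
  exact h

lemma m_sq : nOri * nOri = 0 := by
  have hq : Q5 ((0:E3),(0:ℝ),(1:ℝ)) = 0 := by
    rw [Q5_apply, B5_apply]; simp
  have h := CliffordAlgebra.ι_sq_scalar (Q := Q5) ((0:E3),(0:ℝ),(1:ℝ))
  rw [hq, map_zero] at h
  exact h

lemma ev_sq (p : E3) : ev p * ev p = ⟪p,p⟫•(1:Cl) := by
  have h := CliffordAlgebra.ι_sq_scalar (Q := Q5) (p,(0:ℝ),(0:ℝ))
  rw [Q5_apply, Algebra.algebraMap_eq_smul_one] at h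
  simp only [B5_apply, mul_zero, zero_mul, sub_zero] at h
  exact h

lemma ev_add (p q : E3) : ev (p + q) = ev p + ev q := by
  unfold ev
  rw [show ((p + q : E3), (0:ℝ), (0:ℝ)) = ((p,(0:ℝ),(0:ℝ)) + (q,(0:ℝ),(0:ℝ)) : V5) from by
    simp [Prod.ext_iff], map_add]

lemma ev_smul (t : ℝ) (p : E3) : ev (t • p) = t • ev p := by
  unfold ev
  rw [show ((t • p : E3), (0:ℝ), (0:ℝ)) = (t • (p,(0:ℝ),(0:ℝ)) : V5) from by
    simp [Prod.ext_iff], map_smul]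

lemma ev_sub (p q : E3) : ev (p - q) = ev p - ev q := by
  unfold ev
  rw [show ((p - q : E3), (0:ℝ), (0:ℝ)) = ((p,(0:ℝ),(0:ℝ)) - (q,(0:ℝ),(0:ℝ)) : V5) from by
    simp [Prod.ext_iff], map_sub]

lemma cpt_decomp (p : E3) : cpt p = ev p + (⟪p,p⟫/2)•nInf + nOri := by
  unfold cpt ev nInf nOri
  rw [← map_smul, ← map_add, ← map_add]
  congr 1
  simp [Prod.ext_iff]
end base

section helpers
lemma pushA {x y : Cl} (h : y*x = -(x*y)) (z : Cl) : y*(x*z) = -(x*(y*z)) := by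
  rw [← mul_assoc, h, neg_mul, mul_assoc]
lemma pushS {x y : Cl} {s : ℝ} (h : y*x = s•(1:Cl) - x*y) (z : Cl) : y*(x*z) = s•z - x*(y*z) := by
  rw [← mul_assoc, h, sub_mul, smul_mul_assoc, one_mul, mul_assoc]
lemma pushQ {x : Cl} {s : ℝ} (h : x*x = s•(1:Cl)) (z : Cl) : x*(x*z) = s•z := by
  rw [← mul_assoc, h, smul_mul_assoc, one_mul]
lemma pushZ {x : Cl} (h : x*x = 0) (z : Cl) : x*(x*z) = 0 := by
  rw [← mul_assoc, h, zero_mul]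


lemma w3_xxy (x y : Cl) : w3 x x y = 0 := by unfold w3; simp only [mul_assoc]; module
lemma w3_rot (x a b : Cl) : w3 x a b = w3 a b x := by unfold w3; simp only [mul_assoc]; module
lemma w3_swap23 (a b c : Cl) : w3 a c b = -w3 a b c := by unfold w3; simp only [mul_assoc]; module

lemma w3_antic {a b x : Cl} (ha : x * a = -(a*x)) (hb : x * b = -(b*x)) :
    w3 a b x = w2 a b * x := by
  unfold w3 w2
  simp only [mul_assoc, pushA ha, pushA hb, ha, hb, mul_neg, neg_mul, neg_neg,
    smul_mul_assoc, sub_mul, mul_sub, add_mul, mul_add]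
  module

lemma w3_nm {a n m : Cl} (han : n*a = -(a*n)) (ham : m*a = -(a*m)) :
    w3 a n m = a * w2 n m := by
  unfold w3 w2
  simp only [mul_assoc, pushA han, pushA ham, han, ham, mul_neg, neg_mul, neg_neg,
    smul_mul_assoc, mul_smul_comm, sub_mul, mul_sub, add_mul, mul_add]
  module

lemma vw_eq_w3 {x y z : Cl} {sy sz : ℝ} (hy : y*x = sy•(1:Cl) - x*y) (hz : z*x = sz•(1:Cl) - x*z) :
    vwB x (w2 y z) = w3 x y z := by
  unfold vwB w2 w3
  simp only [mul_assoc, pushS hy, pushS hz, hy, hz, mul_neg, neg_mul, neg_neg,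
    smul_mul_assoc, mul_smul_comm, sub_mul, mul_sub, add_mul, mul_add, smul_sub, smul_add,
    mul_one, one_mul, smul_smul]
  module

lemma lcontr_w2 {x y z : Cl} {sy sz : ℝ} (hy : y*x = sy•(1:Cl) - x*y) (hz : z*x = sz•(1:Cl) - x*z) :
    lcontr x (w2 y z) = (2⁻¹*sy)•z - (2⁻¹*sz)•y := by
  unfold lcontr w2
  simp only [mul_assoc, pushS hy, pushS hz, hy, hz, mul_neg, neg_mul, neg_neg,
    smul_mul_assoc, mul_smul_comm, sub_mul, mul_sub, add_mul, mul_add, smul_sub, smul_add,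
    mul_one, one_mul, smul_smul]
  try module

lemma mul_eq_lcontr_add_vwB (x B : Cl) : x * B = lcontr x B + vwB x B := by
  unfold lcontr vwB; module

lemma mul_decomp {x y : Cl} {s : ℝ} (h : y*x = s•(1:Cl) - x*y) :
    x*y = (2⁻¹*s)•(1:Cl) + w2 x y := by
  unfold w2; rw [h]; module

lemma contr3 {x a b c : Cl} {sa sb sc : ℝ}
    (ha : x*a = sa•(1:Cl) - a*x) (hb : x*b = sb•(1:Cl) - b*x) (hc : x*c = sc•(1:Cl) - c*x) :
    (2:ℝ)⁻¹ • (x * w3 a b c + w3 a b c * x)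
      = (2⁻¹*sa)•w2 b c - (2⁻¹*sb)•w2 a c + (2⁻¹*sc)•w2 a b := by
  unfold w3 w2
  simp only [mul_assoc, pushS ha, pushS hb, pushS hc, ha, hb, hc, mul_neg, neg_mul, neg_neg,
    smul_mul_assoc, mul_smul_comm, sub_mul, mul_sub, add_mul, mul_add, smul_sub, smul_add,
    mul_one, one_mul, smul_smul]
  try module

lemma w2_comm {a b x : Cl} (ha : x*a = -(a*x)) (hb : x*b = -(b*x)) :
    w2 a b * x = x * w2 a b := by
  unfold w2
  simp only [mul_assoc, pushA ha, pushA hb, ha, hb, mul_neg, neg_mul, neg_neg,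
    smul_mul_assoc, mul_smul_comm, sub_mul, mul_sub]
  try module

lemma n_mul_N {n m : Cl} (hnn : n*n = 0) (hmn : m*n = (-2:ℝ)•(1:Cl) - n*m) :
    n * w2 n m = n := by
  unfold w2
  simp only [mul_assoc, pushS hmn, pushZ hnn, hmn, hnn, mul_neg, neg_mul, neg_neg,
    smul_mul_assoc, mul_smul_comm, sub_mul, mul_sub, mul_one, one_mul, zero_mul, mul_zero, smul_sub]
  module

lemma m_mul_N {n m : Cl} (hmm : m*m = 0) (hmn : m*n = (-2:ℝ)•(1:Cl) - n*m) :
    m * w2 n m = -m := by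
  unfold w2
  simp only [mul_assoc, pushS hmn, pushZ hmm, hmn, hmm, mul_neg, neg_mul, neg_neg,
    smul_mul_assoc, mul_smul_comm, sub_mul, mul_sub, mul_one, one_mul, zero_mul, mul_zero, smul_sub]
  module

lemma anti_comb {x a u : Cl} (ha : x*a = -(a*x)) (hu : x*u = -(u*x)) (r : ℝ) :
    x*(a + r•u) = -((a + r•u)*x) := by
  simp only [mul_add, add_mul, mul_smul_comm, smul_mul_assoc, ha, hu]; module

lemma w3_cpt_expand (a b d x y : Cl) (l₁ l₂ l₃ : ℝ) :
    w3 (a + l₁•x + y) (b + l₂•x + y) (d + l₃•x + y) =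
      w3 a b d
      + l₁ • w3 x b d + l₂ • w3 a x d + l₃ • w3 a b x
      + w3 y b d + w3 a y d + w3 a b y
      + (l₂ - l₃) • w3 a x y + (l₃ - l₁) • w3 b x y + (l₁ - l₂) • w3 d x y := by
  unfold w3
  simp only [add_mul, mul_add, smul_mul_assoc, mul_smul_comm, smul_add, smul_sub, smul_smul,
    sub_smul, mul_assoc]
  module

lemma w3_euc_expand (A U V W : Cl) (r : ℝ) :
    w3 (A + r•U) (A + r•V) (A + r•W) =
      (r^3) • w3 U V W + (r^2) • (w3 A V W - w3 A U W + w3 A U V) := by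
  unfold w3
  simp only [add_mul, mul_add, smul_mul_assoc, mul_smul_comm, smul_add, smul_sub, smul_smul,
    sub_smul, mul_assoc, pow_succ, pow_zero, one_mul]
  module

lemma w2_expand (A U V : Cl) (r : ℝ) :
    w2 (A + r•U) (A + r•V) = r•(w2 A V) - r•(w2 A U) + (r^2)•(w2 U V) := by
  unfold w2
  simp only [add_mul, mul_add, smul_mul_assoc, mul_smul_comm, smul_add, smul_sub, smul_smul,
    sub_smul, mul_assoc, pow_succ, pow_zero, one_mul]
  module

lemma w2_expand3 (U V W : Cl) (r : ℝ) :
    w2 (r•U - r•V) (r•V - r•W) = (r^2)•(w2 U V - w2 U W + w2 V W) := by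
  unfold w2
  simp only [sub_mul, mul_sub, smul_mul_assoc, mul_smul_comm, smul_add, smul_sub, smul_smul,
    mul_assoc, pow_succ, pow_zero, one_mul]
  module

lemma vwB_lin (v B₁ B₂ B₃ : Cl) (r : ℝ) :
    vwB v ((r^2)•(B₁ - B₂ + B₃)) = (r^2)•(vwB v B₁ - vwB v B₂ + vwB v B₃) := by
  unfold vwB
  simp only [mul_add, add_mul, mul_sub, sub_mul, smul_add, smul_sub, smul_smul,
    mul_smul_comm, smul_mul_assoc]
  module

lemma main (A U V W n m Ic : Cl) (s₁ s₂ s₃ cc r : ℝ)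
    (hAA : A*A = cc•(1:Cl))
    (hUA : U*A = (2*s₁)•(1:Cl) - A*U) (hVA : V*A = (2*s₂)•(1:Cl) - A*V)
    (hWA : W*A = (2*s₃)•(1:Cl) - A*W)
    (hnA : n*A = -(A*n)) (hnU : n*U = -(U*n)) (hnV : n*V = -(V*n)) (hnW : n*W = -(W*n))
    (hmA : m*A = -(A*m)) (hmU : m*U = -(U*m)) (hmV : m*V = -(V*m)) (hmW : m*W = -(W*m))
    (hnn : n*n = 0) (hmm : m*m = 0) (hmn : m*n = (-2:ℝ)•(1:Cl) - n*m)
    (hIc : Ic = (r^2)•(w2 U V - w2 U W + w2 V W))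
    (hT : w3 U V W = 0)
    (hC3 : w3 A U V - w3 A U W + w3 A V W = 0) :
    w3 (A + r•U + ((cc + 2*r*s₁ + r^2)/2)•n + m)
       (A + r•V + ((cc + 2*r*s₂ + r^2)/2)•n + m)
       (A + r•W + ((cc + 2*r*s₃ + r^2)/2)•n + m)
    = -((A + (cc/2)•n + m - (2:ℝ)⁻¹•(r^2•n)) * Ic * (w2 n m)) := by
  have hAU' : A*U = (2*s₁)•(1:Cl) - U*A := by rw [hUA]; module
  have hAV' : A*V = (2*s₂)•(1:Cl) - V*A := by rw [hVA]; module
  have hAW' : A*W = (2*s₃)•(1:Cl) - W*A := by rw [hWA]; module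
  -- commutation of Ic with n and m
  have hIcn : Ic * n = n * Ic := by
    rw [hIc]
    simp only [smul_mul_assoc, mul_smul_comm, sub_mul, mul_sub, add_mul, mul_add,
      w2_comm hnU hnV, w2_comm hnU hnW, w2_comm hnV hnW]
  have hIcm : Ic * m = m * Ic := by
    rw [hIc]
    simp only [smul_mul_assoc, mul_smul_comm, sub_mul, mul_sub, add_mul, mul_add,
      w2_comm hmU hmV, w2_comm hmU hmW, w2_comm hmV hmW]
  -- A·Ic is a vector
  have hAIc : A * Ic = (r^2)•((s₃-s₂)•U + (s₁-s₃)•V + (s₂-s₁)•W) := by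
    rw [hIc]
    simp only [mul_smul_comm, mul_add, mul_sub]
    rw [mul_eq_lcontr_add_vwB A (w2 U V), mul_eq_lcontr_add_vwB A (w2 U W),
      mul_eq_lcontr_add_vwB A (w2 V W),
      lcontr_w2 hUA hVA, lcontr_w2 hUA hWA, lcontr_w2 hVA hWA,
      vw_eq_w3 hUA hVA, vw_eq_w3 hUA hWA, vw_eq_w3 hVA hWA]
    rw [← sub_eq_zero]
    have h2 : (r^2)•(w3 A U V - w3 A U W + w3 A V W) = 0 := by rw [hC3, smul_zero]
    rw [← h2]; module
  -- the two bracket relations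
  have hbr2 : (2⁻¹*(2*s₁))•w2 V W - (2⁻¹*(2*s₂))•w2 U W + (2⁻¹*(2*s₃))•w2 U V = 0 := by
    have h := contr3 hAU' hAV' hAW'
    rw [hT, mul_zero, zero_mul, add_zero, smul_zero] at h
    exact h.symm
  have hbr1 : cc•((r^2)•(w2 U V - w2 U W + w2 V W))
      = (r^2)•((s₃-s₂)•w2 A U + (s₁-s₃)•w2 A V + (s₂-s₁)•w2 A W) := by
    have h0 : A*(A*Ic) = cc•Ic := pushQ hAA Ic
    rw [hAIc] at h0
    simp only [mul_smul_comm, mul_add, mul_sub] at h0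
    rw [mul_decomp hUA, mul_decomp hVA, mul_decomp hWA, hIc] at h0
    rw [← h0]; module
  -- the Euclidean points
  have hP : w3 (A + r•U) (A + r•V) (A + r•W) = 0 := by
    rw [w3_euc_expand, hT, smul_zero, zero_add,
      show w3 A V W - w3 A U W + w3 A U V = 0 from by rw [← hC3]; abel, smul_zero]
  -- n-pieces
  have hn23 : w3 n (A + r•V) (A + r•W) = w2 (A + r•V) (A + r•W) * n := by
    rw [w3_rot]; exact w3_antic (anti_comb hnA hnV r) (anti_comb hnA hnW r)
  have hn13 : w3 (A + r•U) n (A + r•W) = -(w2 (A + r•U) (A + r•W) * n) := by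
    rw [w3_swap23, w3_antic (anti_comb hnA hnU r) (anti_comb hnA hnW r)]
  have hn12 : w3 (A + r•U) (A + r•V) n = w2 (A + r•U) (A + r•V) * n :=
    w3_antic (anti_comb hnA hnU r) (anti_comb hnA hnV r)
  -- m-pieces
  have hm23 : w3 m (A + r•V) (A + r•W) = w2 (A + r•V) (A + r•W) * m := by
    rw [w3_rot]; exact w3_antic (anti_comb hmA hmV r) (anti_comb hmA hmW r)
  have hm13 : w3 (A + r•U) m (A + r•W) = -(w2 (A + r•U) (A + r•W) * m) := by
    rw [w3_swap23, w3_antic (anti_comb hmA hmU r) (anti_comb hmA hmW r)]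
  have hm12 : w3 (A + r•U) (A + r•V) m = w2 (A + r•U) (A + r•V) * m :=
    w3_antic (anti_comb hmA hmU r) (anti_comb hmA hmV r)
  -- nm-pieces
  have hnm1 : w3 (A + r•U) n m = (A + r•U) * w2 n m :=
    w3_nm (anti_comb hnA hnU r) (anti_comb hmA hmU r)
  have hnm2 : w3 (A + r•V) n m = (A + r•V) * w2 n m :=
    w3_nm (anti_comb hnA hnV r) (anti_comb hmA hmV r)
  have hnm3 : w3 (A + r•W) n m = (A + r•W) * w2 n m :=
    w3_nm (anti_comb hnA hnW r) (anti_comb hmA hmW r)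
  -- RHS transformation
  have h5 : n*(Ic*(w2 n m)) = Ic * n := by
    rw [← mul_assoc, ← hIcn, mul_assoc, n_mul_N hnn hmn]
  have h6 : m*(Ic*(w2 n m)) = -(Ic * m) := by
    rw [← mul_assoc, ← hIcm, mul_assoc, m_mul_N hmm hmn, mul_neg]
  have hR : -((A + (cc/2)•n + m - (2:ℝ)⁻¹•(r^2•n)) * Ic * (w2 n m))
      = (((r^2-cc)/2)•Ic) * n + Ic * m + (-(A*Ic)) * (w2 n m) := by
    simp only [sub_mul, add_mul, smul_mul_assoc, mul_assoc, neg_mul, smul_smul]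
    rw [h5, h6]
    try simp only [smul_mul_assoc, neg_mul]
    rw [← mul_assoc A Ic (w2 n m)]
    module
  -- key coefficient identities
  have hBn : ((cc + 2*r*s₁ + r^2)/2)•w2 (A + r•V) (A + r•W)
      - ((cc + 2*r*s₂ + r^2)/2)•w2 (A + r•U) (A + r•W)
      + ((cc + 2*r*s₃ + r^2)/2)•w2 (A + r•U) (A + r•V)
      = ((r^2-cc)/2)•Ic := by
    rw [w2_expand A V W r, w2_expand A U W r, w2_expand A U V r, hIc]
    rw [← sub_eq_zero]
    have h2 : ((r^3)•((2⁻¹*(2*s₁))•w2 V W - (2⁻¹*(2*s₂))•w2 U W + (2⁻¹*(2*s₃))•w2 U V))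
        + (cc•((r^2)•(w2 U V - w2 U W + w2 V W))
            - (r^2)•((s₃-s₂)•w2 A U + (s₁-s₃)•w2 A V + (s₂-s₁)•w2 A W)) = 0 := by
      rw [hbr2, smul_zero, hbr1, sub_self, zero_add]
    rw [← h2]; module
  have hdv : (((cc + 2*r*s₂ + r^2)/2) - ((cc + 2*r*s₃ + r^2)/2))•(A + r•U)
      + (((cc + 2*r*s₃ + r^2)/2) - ((cc + 2*r*s₁ + r^2)/2))•(A + r•V)
      + (((cc + 2*r*s₁ + r^2)/2) - ((cc + 2*r*s₂ + r^2)/2))•(A + r•W)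
      = -(A*Ic) := by
    rw [hAIc]; module
  -- assemble
  rw [w3_cpt_expand, hP, hn23, hn13, hn12, hm23, hm13, hm12, hnm1, hnm2, hnm3, hR,
    ← hBn, ← hdv]
  have hIcp : Ic = w2 (A + r•U) (A + r•V) - w2 (A + r•U) (A + r•W) + w2 (A + r•V) (A + r•W) := by
    rw [w2_expand, w2_expand, w2_expand, hIc]; module
  rw [hIcp]
  simp only [sub_mul, add_mul, smul_mul_assoc, neg_mul, smul_smul]
  module

end helpers

/-- if the circle plane contains the origin (c ∧ I_c = 0), then
V₃ = −(C − (1/2)r²n) I_c N. -/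
theorem circle_trivector_origin_plane
    (c : E3) (r : ℝ) (hr : 0 < r)
    (r₁ r₂ r₃ : E3) (h₁ : ‖r₁‖ = 1) (h₂ : ‖r₂‖ = 1) (h₃ : ‖r₃‖ = 1)
    (p₁ p₂ p₃ : E3)
    (hp₁ : p₁ = c + r • r₁) (hp₂ : p₂ = c + r • r₂) (hp₃ : p₃ = c + r • r₃)
    (Ic : Cl) (hIc : Ic = w2 (ev (p₁ - p₂)) (ev (p₂ - p₃)))
    (hin₁ : vwB (ev r₁) Ic = 0) (hin₂ : vwB (ev r₂) Ic = 0)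
    (hin₃ : vwB (ev r₃) Ic = 0)
    (hco : vwB (ev c) Ic = 0) :
    w3 (cpt p₁) (cpt p₂) (cpt p₃) =
      -((cpt c - (2:ℝ)⁻¹ • (r ^ 2 • nInf)) * Ic * Nb) := by
  have hr0 : r ≠ 0 := ne_of_gt hr
  have hAA : ev c * ev c = ⟪c,c⟫•(1:Cl) := ev_sq c
  have hIcE : Ic = (r^2)•(w2 (ev r₁) (ev r₂) - w2 (ev r₁) (ev r₃) + w2 (ev r₂) (ev r₃)) := by
    rw [hIc, show p₁ - p₂ = r•r₁ - r•r₂ from by rw [hp₁, hp₂]; abel,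
      show p₂ - p₃ = r•r₂ - r•r₃ from by rw [hp₂, hp₃]; abel,
      ev_sub, ev_sub, ev_smul, ev_smul, ev_smul, w2_expand3]
  have hT : w3 (ev r₁) (ev r₂) (ev r₃) = 0 := by
    have h := hin₁
    rw [hIcE, vwB_lin, vw_eq_w3 (ev_rel r₁ r₁) (ev_rel r₁ r₂),
      vw_eq_w3 (ev_rel r₁ r₁) (ev_rel r₁ r₃), vw_eq_w3 (ev_rel r₁ r₂) (ev_rel r₁ r₃),
      w3_xxy, w3_xxy, sub_zero, zero_add] at h
    rcases smul_eq_zero.mp h with h' | h'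
    · exact absurd h' (pow_ne_zero 2 hr0)
    · exact h'
  have hC3 : w3 (ev c) (ev r₁) (ev r₂) - w3 (ev c) (ev r₁) (ev r₃)
      + w3 (ev c) (ev r₂) (ev r₃) = 0 := by
    have h := hco
    rw [hIcE, vwB_lin, vw_eq_w3 (ev_rel c r₁) (ev_rel c r₂),
      vw_eq_w3 (ev_rel c r₁) (ev_rel c r₃), vw_eq_w3 (ev_rel c r₂) (ev_rel c r₃)] at h
    rcases smul_eq_zero.mp h with h' | h'
    · exact absurd h' (pow_ne_zero 2 hr0)
    · exact h'
  have hpp₁ : ⟪p₁,p₁⟫ = ⟪c,c⟫ + 2*r*⟪c,r₁⟫ + r^2 := by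
    rw [hp₁, real_inner_add_add_self]
    simp only [real_inner_smul_right, real_inner_smul_left]
    rw [show (⟪r₁,r₁⟫:ℝ) = 1 from by rw [real_inner_self_eq_norm_mul_norm, h₁]; norm_num]
    ring
  have hpp₂ : ⟪p₂,p₂⟫ = ⟪c,c⟫ + 2*r*⟪c,r₂⟫ + r^2 := by
    rw [hp₂, real_inner_add_add_self]
    simp only [real_inner_smul_right, real_inner_smul_left]
    rw [show (⟪r₂,r₂⟫:ℝ) = 1 from by rw [real_inner_self_eq_norm_mul_norm, h₂]; norm_num]
    ring
  have hpp₃ : ⟪p₃,p₃⟫ = ⟪c,c⟫ + 2*r*⟪c,r₃⟫ + r^2 := by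
    rw [hp₃, real_inner_add_add_self]
    simp only [real_inner_smul_right, real_inner_smul_left]
    rw [show (⟪r₃,r₃⟫:ℝ) = 1 from by rw [real_inner_self_eq_norm_mul_norm, h₃]; norm_num]
    ring
  have hev₁ : ev p₁ = ev c + r•(ev r₁) := by rw [hp₁, ev_add, ev_smul]
  have hev₂ : ev p₂ = ev c + r•(ev r₂) := by rw [hp₂, ev_add, ev_smul]
  have hev₃ : ev p₃ = ev c + r•(ev r₃) := by rw [hp₃, ev_add, ev_smul]
  rw [cpt_decomp p₁, cpt_decomp p₂, cpt_decomp p₃, cpt_decomp c,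
    hpp₁, hpp₂, hpp₃, hev₁, hev₂, hev₃,
    show Nb = w2 nInf nOri from rfl,
    show (⟪c,c⟫ + 2*r*⟪c,r₁⟫ + r^2)/2 = (⟪c,c⟫ + 2*r*⟪c,r₁⟫ + r^2)/2 from rfl]
  exact main (ev c) (ev r₁) (ev r₂) (ev r₃) nInf nOri Ic ⟪c,r₁⟫ ⟪c,r₂⟫ ⟪c,r₃⟫ ⟪c,c⟫ r
    hAA (ev_rel c r₁) (ev_rel c r₂) (ev_rel c r₃)
    (ev_n c) (ev_n r₁) (ev_n r₂) (ev_n r₃)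
    (ev_m c) (ev_m r₁) (ev_m r₂) (ev_m r₃)
    n_sq m_sq m_n hIcE hT hC3
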